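/- For p > 1, if A is a complex m×n matrix with ‖A‖_p = (∑_{i,j}|a_{ij}|^{p/(p−1)})^{(p−1)/p}, then A has rank one, i.e., there exist vectors u ∈ ℂᵐ, v ∈ ℂⁿ with a_{ij} = u_i v_j for all i, j. -/

import Mathlib

open Finset

private lemma young_eq {p q a b : ℝ} (hpq : Real.HolderConjugate p q) (ha : 0 ≤ a) (hb : 0 ≤ b)
    (h : a * b = a ^ q / q + b ^ p / p) : a ^ q = b ^ p := by
  have hq1 : 1 < q := hpq.symm.lt
  have hq0 : 0 < q := hpq.symm.pos
  have hp0 : 0 < p := hpq.pos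
  rcases eq_or_lt_of_le hb with hb0 | hb0
  · rw [← hb0, Real.zero_rpow hp0.ne'] at h ⊢
    have h1 : 0 ≤ a ^ q := Real.rpow_nonneg ha q
    have h3 : 0 ≤ a ^ q / q := div_nonneg h1 hq0.le
    simp only [mul_zero, zero_div] at h
    have : a ^ q / q = 0 := by linarith
    rw [div_eq_zero_iff] at this
    rcases this with h2 | h2
    · exact h2
    · exact absurd h2 hq0.ne'
  · set c := b ^ (p - 1) with hc
    have hcpos : 0 < c := Real.rpow_pos_of_pos hb0 _
    set t := a / c with ht
    have ht0 : 0 ≤ t := div_nonneg ha hcpos.le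
    have hac : a = t * c := by rw [ht, div_mul_cancel₀ a hcpos.ne']
    have hcq : c ^ q = b ^ p := by
      rw [hc, ← Real.rpow_mul hb0.le, hpq.sub_one_mul_conj]
    have hcb : c * b = b ^ p := by
      rw [hc, ← Real.rpow_add_one hb0.ne' (p - 1)]
      norm_num
    have hB : (0:ℝ) < b ^ p := Real.rpow_pos_of_pos hb0 p
    have e1 : a * b = t * b ^ p := by rw [hac, mul_assoc, hcb]
    have e2 : a ^ q = t ^ q * b ^ p := by rw [hac, Real.mul_rpow ht0 hcpos.le, hcq]
    rw [e1, e2] at h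
    have key : t = t ^ q / q + 1 / p := by
      apply mul_right_cancel₀ hB.ne'
      rw [h]; ring
    rcases eq_or_ne t 1 with ht1 | ht1
    · rw [e2, ht1, Real.one_rpow, one_mul]
    · exfalso
      have hs : (-1:ℝ) ≤ t - 1 := by linarith
      have hs' : t - 1 ≠ 0 := sub_ne_zero.mpr ht1
      have hber := one_add_mul_self_lt_rpow_one_add hs hs' hq1
      have h1t : (1:ℝ) + (t - 1) = t := by ring
      rw [h1t] at hber
      have h4 : (1 + q * (t - 1)) / q < t ^ q / q := by gcongr
      have h5 : (1 + q * (t - 1)) / q = q⁻¹ + t - 1 := by field_simp; ring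
      have hipq : p⁻¹ + q⁻¹ = 1 := hpq.inv_add_inv_eq_one
      rw [h5] at h4
      rw [one_div] at key
      linarith

private lemma complex_of_re_eq_norm {w : ℂ} (h : w.re = ‖w‖) : w = ((‖w‖ : ℝ) : ℂ) := by
  have h2 : w.re * w.re + w.im * w.im = ‖w‖ * ‖w‖ := by
    rw [← Complex.normSq_apply, Complex.normSq_eq_norm_sq]; ring
  have him : w.im = 0 := by
    rw [h] at h2
    have h3 : w.im * w.im = 0 := by linarith
    exact mul_self_eq_zero.mp h3
  apply Complex.ext
  · simp [← h]
  · simp [him]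

private lemma tri_eq {ι : Type*} [Fintype ι] (z : ι → ℂ)
    (h : ‖∑ i, z i‖ = ∑ i, ‖z i‖) (i : ι) :
    z i * (starRingEnd ℂ) (∑ j, z j) = (((‖z i‖ * ‖∑ j, z j‖ : ℝ)) : ℂ) := by
  set Z := ∑ j, z j with hZ
  have hle : ∀ k ∈ Finset.univ, (z k * (starRingEnd ℂ) Z).re ≤ ‖z k * (starRingEnd ℂ) Z‖ := by
    intro k _
    exact Complex.re_le_norm _
  have hsums : ∑ k, (z k * (starRingEnd ℂ) Z).re = ∑ k, ‖z k * (starRingEnd ℂ) Z‖ := by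
    have hL : ∑ k, (z k * (starRingEnd ℂ) Z).re = ‖Z‖ * ‖Z‖ := by
      rw [← Complex.re_sum, ← Finset.sum_mul, ← hZ, Complex.mul_conj, Complex.normSq_eq_norm_sq]
      simp [sq]
    have hR : ∑ k, ‖z k * (starRingEnd ℂ) Z‖ = ‖Z‖ * ‖Z‖ := by
      simp only [norm_mul, RCLike.norm_conj]
      rw [← Finset.sum_mul, ← h]
    rw [hL, hR]
  have hpt := (Finset.sum_eq_sum_iff_of_le hle).mp hsums i (Finset.mem_univ i)
  have := complex_of_re_eq_norm hpt
  rw [this, norm_mul, RCLike.norm_conj]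

/-- The spectral p-norm of a complex m×n matrix. -/
noncomputable def specNorm (m n : ℕ) (p : ℝ) (A : Matrix (Fin m) (Fin n) ℂ) : ℝ :=
  sSup {t : ℝ | ∃ (x : Fin n → ℂ) (y : Fin m → ℂ),
    (∑ j, ‖x j‖ ^ p) = 1 ∧ (∑ i, ‖y i‖ ^ p) = 1 ∧
    t = ‖∑ i, ∑ j, A i j * x j * y i‖}

/-- Equality ‖A‖_p = |A|_{p/(p-1)} forces rank one. -/
theorem stmt_12 (m n : ℕ) (A : Matrix (Fin m) (Fin n) ℂ) (p : ℝ) (hp : 1 < p)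
    (hA : A ≠ 0)
    (heq : specNorm m n p A =
      (∑ i, ∑ j, ‖A i j‖ ^ (p / (p - 1))) ^ ((p - 1) / p)) :
    ∃ (u : Fin m → ℂ) (v : Fin n → ℂ), ∀ i j, A i j = u i * v j := by
  classical
  set q : ℝ := p / (p - 1) with hqdef
  have hpq : p.HolderConjugate q := Real.HolderConjugate.conjExponent hp
  have hp0 : 0 < p := hpq.pos
  have hq0 : 0 < q := hpq.symm.pos
  -- a nonzero entry
  have hex : ∃ i j, A i j ≠ 0 := by
    by_contra hcon
    push_neg at hcon
    exact hA (by ext i j; simpa using hcon i j)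
  obtain ⟨i0, j0, hij0⟩ := hex
  set T : ℝ := ∑ i, ∑ j, ‖A i j‖ ^ q with hTdef
  have hT0 : 0 < T := by
    rw [hTdef]
    apply Finset.sum_pos'
      (fun i _ => Finset.sum_nonneg fun j _ => Real.rpow_nonneg (norm_nonneg _) q)
    exact ⟨i0, Finset.mem_univ _, Finset.sum_pos' (fun j _ => Real.rpow_nonneg (norm_nonneg _) q)
      ⟨j0, Finset.mem_univ _, Real.rpow_pos_of_pos (norm_pos_iff.mpr hij0) q⟩⟩
  set M : ℝ := T ^ ((p - 1) / p) with hMdef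
  have hM0 : 0 < M := Real.rpow_pos_of_pos hT0 _
  have hinvq : (p - 1) / p = q⁻¹ := by rw [hqdef, inv_div]
  have hMq : M ^ q = T := by
    rw [hMdef, ← Real.rpow_mul hT0.le, hinvq, inv_mul_cancel₀ hq0.ne', Real.rpow_one]
  -- attainment of the supremum
  have hcont_rpow : Continuous fun t : ℝ => t ^ p :=
    continuous_iff_continuousAt.2 fun t => Real.continuousAt_rpow_const t p (Or.inr hp0.le)
  set K : Set ((Fin n → ℂ) × (Fin m → ℂ)) :=
    {w | (∑ j, ‖w.1 j‖ ^ p) = 1 ∧ (∑ i, ‖w.2 i‖ ^ p) = 1} with hKdef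
  set f : ((Fin n → ℂ) × (Fin m → ℂ)) → ℝ :=
    fun w => ‖∑ i, ∑ j, A i j * w.1 j * w.2 i‖ with hfdef
  have hSeq : {t : ℝ | ∃ (x : Fin n → ℂ) (y : Fin m → ℂ),
      (∑ j, ‖x j‖ ^ p) = 1 ∧ (∑ i, ‖y i‖ ^ p) = 1 ∧
      t = ‖∑ i, ∑ j, A i j * x j * y i‖} = f '' K := by
    ext t
    constructor
    · rintro ⟨x, y, hx, hy, rfl⟩; exact ⟨(x, y), ⟨hx, hy⟩, rfl⟩
    · rintro ⟨⟨x, y⟩, ⟨hx, hy⟩, rfl⟩; exact ⟨x, y, hx, hy, rfl⟩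
  have h1 : specNorm m n p A = sSup (f '' K) := by rw [specNorm, hSeq]
  have hg1 : Continuous fun w : (Fin n → ℂ) × (Fin m → ℂ) => ∑ j, ‖w.1 j‖ ^ p :=
    continuous_finset_sum _ fun j _ =>
      hcont_rpow.comp ((continuous_apply j).comp continuous_fst).norm
  have hg2 : Continuous fun w : (Fin n → ℂ) × (Fin m → ℂ) => ∑ i, ‖w.2 i‖ ^ p :=
    continuous_finset_sum _ fun i _ =>
      hcont_rpow.comp ((continuous_apply i).comp continuous_snd).norm
  have hKclosed : IsClosed K := by
    have : K = (fun w : (Fin n → ℂ) × (Fin m → ℂ) => ∑ j, ‖w.1 j‖ ^ p) ⁻¹' {1} ∩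
        (fun w : (Fin n → ℂ) × (Fin m → ℂ) => ∑ i, ‖w.2 i‖ ^ p) ⁻¹' {1} := rfl
    rw [this]
    exact (isClosed_singleton.preimage hg1).inter (isClosed_singleton.preimage hg2)
  have hnorm_le_one : ∀ (k : ℕ) (v : Fin k → ℂ), (∑ i, ‖v i‖ ^ p) = 1 → ∀ i, ‖v i‖ ≤ 1 := by
    intro k v hv i
    have h1 : ‖v i‖ ^ p ≤ 1 := by
      rw [← hv]
      exact Finset.single_le_sum (fun j _ => Real.rpow_nonneg (norm_nonneg _) p)
        (Finset.mem_univ i)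
    by_contra hgt
    push_neg at hgt
    have : 1 < ‖v i‖ ^ p :=
      (Real.one_lt_rpow_iff_of_pos (by linarith)).mpr (Or.inl ⟨hgt, hp0⟩)
    linarith
  have hKbdd : Bornology.IsBounded K := by
    apply (Metric.isBounded_closedBall (x := (0 : (Fin n → ℂ) × (Fin m → ℂ))) (r := 1)).subset
    rintro ⟨x, y⟩ ⟨hx, hy⟩
    rw [Metric.mem_closedBall, dist_zero_right, Prod.norm_def]
    apply max_le
    · exact (pi_norm_le_iff_of_nonneg zero_le_one).mpr (hnorm_le_one n x hx)
    · exact (pi_norm_le_iff_of_nonneg zero_le_one).mpr (hnorm_le_one m y hy)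
  have hKcompact : IsCompact K := Metric.isCompact_of_isClosed_isBounded hKclosed hKbdd
  have hfcont : Continuous f := by
    apply Continuous.norm
    exact continuous_finset_sum _ fun i _ => continuous_finset_sum _ fun j _ =>
      ((continuous_const.mul ((continuous_apply j).comp continuous_fst)).mul
        ((continuous_apply i).comp continuous_snd))
  have hKne : K.Nonempty := by
    refine ⟨(fun j => if j = j0 then 1 else 0, fun i => if i = i0 then 1 else 0), ?_, ?_⟩
    · have hpt : ∀ j : Fin n, ‖(if j = j0 then (1:ℂ) else 0)‖ ^ p
          = if j = j0 then (1:ℝ) else 0 := by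
        intro j
        by_cases h : j = j0 <;> simp [h, Real.zero_rpow hp0.ne', Real.one_rpow]
      simp only [hpt]
      simp
    · have hpt : ∀ i : Fin m, ‖(if i = i0 then (1:ℂ) else 0)‖ ^ p
          = if i = i0 then (1:ℝ) else 0 := by
        intro i
        by_cases h : i = i0 <;> simp [h, Real.zero_rpow hp0.ne', Real.one_rpow]
      simp only [hpt]
      simp
  have hsup_mem : sSup (f '' K) ∈ f '' K :=
    (hKcompact.image hfcont).sSup_mem (hKne.image f)
  obtain ⟨⟨x, y⟩, ⟨hx0, hy0⟩, hfxy⟩ := hsup_mem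
  have hx : (∑ j, ‖x j‖ ^ p) = 1 := hx0
  have hy : (∑ i, ‖y i‖ ^ p) = 1 := hy0
  have hZM : ‖∑ i, ∑ j, A i j * x j * y i‖ = M := by
    have := hfxy.trans (h1.symm.trans heq)
    simpa [hfdef] using this
  -- pass to the product index
  set z : Fin m × Fin n → ℂ := fun e => A e.1 e.2 * x e.2 * y e.1 with hzdef
  set Z : ℂ := ∑ e, z e with hZdef
  have hZdouble : Z = ∑ i, ∑ j, A i j * x j * y i := by
    rw [hZdef, Fintype.sum_prod_type]
  have hnormZ : ‖Z‖ = M := by rw [hZdouble]; exact hZM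
  set F : Fin m × Fin n → ℝ := fun e => ‖A e.1 e.2‖ / M with hFdef
  set G : Fin m × Fin n → ℝ := fun e => ‖x e.2‖ * ‖y e.1‖ with hGdef
  have hFnn : ∀ e, 0 ≤ F e := fun e => div_nonneg (norm_nonneg _) hM0.le
  have hGnn : ∀ e, 0 ≤ G e := fun e => mul_nonneg (norm_nonneg _) (norm_nonneg _)
  have hsumFq : ∑ e : Fin m × Fin n, F e ^ q = 1 := by
    have hpt : ∀ e : Fin m × Fin n, F e ^ q = ‖A e.1 e.2‖ ^ q / M ^ q := fun e =>
      Real.div_rpow (norm_nonneg _) hM0.le _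
    rw [Finset.sum_congr rfl fun e _ => hpt e, ← Finset.sum_div, hMq,
      Fintype.sum_prod_type, ← hTdef, div_self hT0.ne']
  have hsumGp : ∑ e : Fin m × Fin n, G e ^ p = 1 := by
    have hpt : ∀ e : Fin m × Fin n, G e ^ p = ‖y e.1‖ ^ p * ‖x e.2‖ ^ p := by
      intro e
      rw [hGdef]
      rw [Real.mul_rpow (norm_nonneg _) (norm_nonneg _)]
      ring
    rw [Finset.sum_congr rfl fun e _ => hpt e, Fintype.sum_prod_type]
    have : ∑ i, ∑ j, ‖y i‖ ^ p * ‖x j‖ ^ p = (∑ i, ‖y i‖ ^ p) * (∑ j, ‖x j‖ ^ p) :=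
      (Finset.sum_mul_sum _ _ _ _).symm
    rw [this, hx, hy, one_mul]
  have hyoung : ∀ e ∈ Finset.univ (α := Fin m × Fin n),
      F e * G e ≤ F e ^ q / q + G e ^ p / p := fun e _ =>
    Real.young_inequality_of_nonneg (hFnn e) (hGnn e) hpq.symm
  have hRHS : ∑ e : Fin m × Fin n, (F e ^ q / q + G e ^ p / p) = 1 := by
    rw [Finset.sum_add_distrib, ← Finset.sum_div, ← Finset.sum_div, hsumFq, hsumGp]
    rw [one_div, one_div]
    have := hpq.inv_add_inv_eq_one
    linarith
  have hFGle : ∑ e : Fin m × Fin n, F e * G e ≤ 1 := by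
    calc ∑ e : Fin m × Fin n, F e * G e ≤ ∑ e : Fin m × Fin n, (F e ^ q / q + G e ^ p / p) :=
          Finset.sum_le_sum hyoung
      _ = 1 := hRHS
  have hnormz : ∀ e : Fin m × Fin n, ‖z e‖ = M * (F e * G e) := by
    intro e
    rw [hzdef, hFdef, hGdef]
    simp only [norm_mul]
    field_simp
  have hsum_norms : ∑ e : Fin m × Fin n, ‖z e‖ = M * ∑ e : Fin m × Fin n, F e * G e := by
    rw [Finset.mul_sum, Finset.sum_congr rfl fun e _ => hnormz e]
  have hZle : ‖Z‖ ≤ ∑ e : Fin m × Fin n, ‖z e‖ := by rw [hZdef]; exact norm_sum_le _ _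
  have hFG1 : ∑ e : Fin m × Fin n, F e * G e = 1 := by
    have h6 : M ≤ M * ∑ e : Fin m × Fin n, F e * G e := by
      rw [← hsum_norms, ← hnormZ]; exact hZle
    have h7 : 1 ≤ ∑ e : Fin m × Fin n, F e * G e := by
      by_contra hlt
      push_neg at hlt
      nlinarith
    linarith
  have htri_eq : ‖∑ e : Fin m × Fin n, z e‖ = ∑ e : Fin m × Fin n, ‖z e‖ := by
    rw [← hZdef, hnormZ, hsum_norms, hFG1, mul_one]
  have hYeq : ∀ e : Fin m × Fin n, F e * G e = F e ^ q / q + G e ^ p / p := by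
    have := (Finset.sum_eq_sum_iff_of_le hyoung).mp (by rw [hFG1, hRHS])
    exact fun e => this e (Finset.mem_univ e)
  have hFqGp : ∀ e : Fin m × Fin n, F e ^ q = G e ^ p := fun e =>
    young_eq hpq (hFnn e) (hGnn e) (hYeq e)
  have hFeq : ∀ e : Fin m × Fin n, F e = G e ^ (p - 1) := by
    intro e
    have h8 : (F e ^ q) ^ q⁻¹ = (G e ^ p) ^ q⁻¹ := by rw [hFqGp e]
    rw [Real.rpow_rpow_inv (hFnn e) hq0.ne'] at h8
    rw [h8, ← Real.rpow_mul (hGnn e)]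
    congr 1
    rw [← div_eq_mul_inv]
    exact hpq.div_conj_eq_sub_one
  have hznormG : ∀ e : Fin m × Fin n, ‖z e‖ = M * G e ^ p := by
    intro e
    rw [hnormz e, hFeq e]
    congr 1
    rcases eq_or_lt_of_le (hGnn e) with h0 | h0
    · rw [← h0, Real.zero_rpow hp0.ne', Real.zero_rpow hpq.sub_one_pos.ne', zero_mul]
    · rw [← Real.rpow_add_one h0.ne' (p - 1)]
      norm_num
  have hZne : Z ≠ 0 := by
    intro h0
    rw [h0, norm_zero] at hnormZ
    exact hM0.ne' hnormZ.symm
  have hzpt : ∀ e : Fin m × Fin n, z e * (starRingEnd ℂ) Z = ((‖z e‖ * M : ℝ) : ℂ) := by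
    intro e
    have h8 := tri_eq z htri_eq e
    rw [← hZdef, hnormZ] at h8
    exact h8
  have hzZ : ∀ e : Fin m × Fin n, z e = ((‖z e‖ / M : ℝ) : ℂ) * Z := by
    intro e
    have h8 := hzpt e
    have hconj : (starRingEnd ℂ) Z ≠ 0 := by
      simpa using hZne
    apply mul_right_cancel₀ hconj
    rw [h8, mul_assoc]
    have h9 : Z * (starRingEnd ℂ) Z = ((M * M : ℝ) : ℂ) := by
      rw [Complex.mul_conj, Complex.normSq_eq_norm_sq, hnormZ]
      push_cast
      ring
    rw [h9]
    push_cast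
    have hMne : (M : ℂ) ≠ 0 := Complex.ofReal_ne_zero.mpr hM0.ne'
    field_simp
  refine ⟨fun i => if y i = 0 then 0 else ((‖y i‖ ^ p : ℝ) : ℂ) * Z / y i,
          fun j => if x j = 0 then 0 else ((‖x j‖ ^ p : ℝ) : ℂ) / x j, ?_⟩
  intro i j
  have hAzero : G (i, j) = 0 → A i j = 0 := by
    intro hG0
    have hF0 : F (i, j) = 0 := by
      rw [hFeq (i, j), hG0, Real.zero_rpow hpq.sub_one_pos.ne']
    have hdiv : ‖A i j‖ / M = 0 := hF0
    rw [div_eq_zero_iff] at hdiv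
    rcases hdiv with h | h
    · exact norm_eq_zero.mp h
    · exact absurd h hM0.ne'
  by_cases hxj : x j = 0
  · have hA0 : A i j = 0 := hAzero (by show ‖x j‖ * ‖y i‖ = 0; rw [hxj]; simp)
    simp [hxj, hA0]
  · by_cases hyi : y i = 0
    · have hA0 : A i j = 0 := hAzero (by show ‖x j‖ * ‖y i‖ = 0; rw [hyi]; simp)
      simp [hyi, hA0]
    · simp only [if_neg hxj, if_neg hyi]
      have hze := hzZ (i, j)
      have hzn : ‖z (i, j)‖ = M * (‖x j‖ * ‖y i‖) ^ p := hznormG (i, j)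
      rw [hzn] at hze
      have hzij : z (i, j) = A i j * x j * y i := rfl
      rw [hzij] at hze
      have hcancel : M * (‖x j‖ * ‖y i‖) ^ p / M = ‖x j‖ ^ p * ‖y i‖ ^ p := by
        rw [mul_comm, mul_div_assoc, div_self hM0.ne', mul_one,
          Real.mul_rpow (norm_nonneg _) (norm_nonneg _)]
      rw [hcancel, Complex.ofReal_mul] at hze
      rw [div_mul_div_comm, eq_div_iff (mul_ne_zero hyi hxj)]
      linear_combination hze
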